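/- Let X be a principal 𝕋-bundle, t₀ ∈ X with trivial isotropy, a ∈ S(C₀^𝕋(X)) with 0 < |a(t₀)| < 1, and λ = a(t₀)/|a(t₀)|. Then for each ε > 0 with |a(t₀)| + ε < 1 there exist aₑ ∈ S(C₀^𝕋(X)) and bₑ ∈ C₀^𝕋(X) with ‖bₑ‖ = 1, bₑ(t₀) = 1, aₑ(t₀) = a(t₀), ‖a − aₑ‖ ≤ ε, and for every r ∈ (0,1) the function r·aₑ + (1 − r|a(t₀)|)·λ·bₑ has sup norm 1 and takes value λ at t₀. -/

import Mathlib

open scoped ZeroAtInfty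
open BoundedContinuousFunction Filter Topology ZeroAtInftyContinuousMap

private lemma keyineq16 (c s r : ℝ) (hc0 : 0 < c) (hc1 : c < 1) (hs0 : 0 ≤ s) (hs1 : s ≤ 1)
    (hr0 : 0 ≤ r) (hr1 : r ≤ 1) :
    |r * s + (1 - r * c) * (s * min (1/c) ((1 + c - 2*s)/((1-c) * max s c)))| ≤ 1 := by
  have h1c : (0:ℝ) < 1 - c := by linarith
  rcases le_total s c with h | h
  · rw [max_eq_right h, min_eq_left (by
      rw [div_le_div_iff₀ hc0 (by positivity)]
      nlinarith)]
    have he : r * s + (1 - r * c) * (s * (1/c)) = s / c := by field_simp; ring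
    rw [he, abs_of_nonneg (by positivity), div_le_one hc0]; linarith
  · have hs0' : 0 < s := lt_of_lt_of_le hc0 h
    rw [max_eq_left h, min_eq_right (by
      rw [div_le_div_iff₀ (by positivity) hc0]
      nlinarith)]
    have he : r * s + (1 - r*c) * (s * ((1+c-2*s)/((1-c)*s)))
        = r*s + (1-r*c)*((1+c-2*s)/(1-c)) := by field_simp
    have he2 : r*s + (1-r*c)*((1+c-2*s)/(1-c))
        = (r*s*(1-c) + (1-r*c)*(1+c-2*s))/(1-c) := by field_simp
    rw [he, he2, abs_div, abs_of_pos h1c, div_le_one h1c, abs_le]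
    constructor
    · nlinarith [mul_nonneg (mul_nonneg hr0 (sub_nonneg.2 h)) (by linarith : (0:ℝ) ≤ 1+c)]
    · nlinarith [mul_nonneg (sub_nonneg.2 h) (by nlinarith : (0:ℝ) ≤ 2 - r - r*c)]

set_option maxHeartbeats 1000000 in
theorem stmt16 {X : Type*} [TopologicalSpace X] [LocallyCompactSpace X] [T2Space X]
    [MulAction Circle X] [ContinuousSMul Circle X]
    (hfree : ∀ (l : Circle) (t : X), l • t = t → l = 1)
    (t₀ : X)
    (a : C₀(X, ℂ)) (haeq : ∀ (l : Circle) (t : X), a (l • t) = (l : ℂ) * a t)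
    (ha1 : ‖a‖ = 1) (h0 : 0 < ‖a t₀‖) (hlt : ‖a t₀‖ < 1)
    (lam : ℂ) (hlam : lam = a t₀ / (‖a t₀‖ : ℂ)) :
    ∀ ε : ℝ, 0 < ε → ‖a t₀‖ + ε < 1 →
      ∃ ae be : C₀(X, ℂ),
        (∀ (l : Circle) (t : X), ae (l • t) = (l : ℂ) * ae t) ∧
        (∀ (l : Circle) (t : X), be (l • t) = (l : ℂ) * be t) ∧
        ‖ae‖ = 1 ∧ ‖be‖ = 1 ∧ be t₀ = 1 ∧ ae t₀ = a t₀ ∧ ‖a - ae‖ ≤ ε ∧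
        ∀ r : ℝ, 0 < r → r < 1 →
          ‖(r : ℂ) • ae + (((1 - r * ‖a t₀‖ : ℝ) : ℂ) * lam) • be‖ = 1 ∧
          ((r : ℂ) • ae + (((1 - r * ‖a t₀‖ : ℝ) : ℂ) * lam) • be) t₀ = lam := by
  intro ε hε hεlt
  set c : ℝ := ‖a t₀‖ with hc
  have h1c : (0:ℝ) < 1 - c := by linarith
  have hcC : ((c:ℝ) : ℂ) ≠ 0 := by exact_mod_cast (ne_of_gt h0)
  have hlamnorm : ‖lam‖ = 1 := by
    rw [hlam, norm_div, Complex.norm_real, Real.norm_eq_abs, abs_of_pos h0, ← hc,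
      div_self (ne_of_gt h0)]
  have hlam0 : lam ≠ 0 := by
    intro h; rw [h, norm_zero] at hlamnorm; norm_num at hlamnorm
  have hat₀ : a t₀ = (c : ℂ) * lam := by rw [hlam]; field_simp
  have hs1 : ∀ t, ‖a t‖ ≤ 1 := by
    intro t
    have h := a.toBCF.norm_coe_le_norm t
    rw [norm_toBCF_eq_norm, ha1] at h
    exact h
  -- the radial profile
  set ψ : ℝ → ℝ := fun x => min (1/c) ((1 + c - 2*x)/((1-c) * max x c)) with hψ
  have hψcont : Continuous ψ := by
    apply continuous_const.min
    apply Continuous.div (by fun_prop) (continuous_const.mul (continuous_id.max continuous_const))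
    intro x
    have : c ≤ max x c := le_max_right x c
    exact mul_ne_zero h1c.ne' (lt_of_lt_of_le h0 this).ne'
  have hψc : ψ c = 1 / c := by
    have h1 : (1 + c - 2*c)/((1-c) * max c c) = 1/c := by
      rw [max_self, show 1 + c - 2*c = 1 - c by ring]
      field_simp
    rw [hψ]; simp only [h1, min_self]
  have hψhigh : ∀ s : ℝ, c ≤ s → ψ s = (1+c-2*s)/((1-c)*s) := by
    intro s hsc
    have hs0' : 0 < s := lt_of_lt_of_le h0 hsc
    rw [hψ]; simp only [max_eq_left hsc]
    rw [min_eq_right (by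
      rw [div_le_div_iff₀ (by positivity) h0]
      nlinarith)]
  have hψkey : ∀ s r : ℝ, 0 ≤ s → s ≤ 1 → 0 ≤ r → r ≤ 1 →
      |r*s + (1 - r*c)*(s * ψ s)| ≤ 1 := by
    intro s r hs0 hs1' hr0 hr1
    simp only [hψ]
    exact keyineq16 c s r h0 hlt hs0 hs1' hr0 hr1
  -- the function f(z) = z ψ(|z|)
  set f : ℂ → ℂ := fun z => z * ((ψ ‖z‖ : ℝ) : ℂ) with hf
  have hfcont : Continuous f :=
    continuous_id.mul (Complex.continuous_ofReal.comp (hψcont.comp continuous_norm))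
  have hf0 : f 0 = 0 := by simp [hf]
  have hzero : Tendsto (fun t => lam⁻¹ * f (a t)) (cocompact X) (𝓝 0) := by
    have h2 : Tendsto (fun z : ℂ => lam⁻¹ * f z) (𝓝 0) (𝓝 0) := by
      have hco : Continuous fun z : ℂ => lam⁻¹ * f z := continuous_const.mul hfcont
      simpa [hf0] using hco.tendsto 0
    exact h2.comp a.zero_at_infty'
  set be : C₀(X, ℂ) :=
    ⟨⟨fun t => lam⁻¹ * f (a t), continuous_const.mul (hfcont.comp a.continuous)⟩, hzero⟩ with hbe
  have hbe_apply : ∀ t, be t = lam⁻¹ * (a t * ((ψ ‖a t‖ : ℝ) : ℂ)) := fun t => rfl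
  clear_value be f ψ c
  have hll : lam * lam⁻¹ = 1 := mul_inv_cancel₀ hlam0
  -- be t₀ = 1
  have hbet₀ : be t₀ = 1 := by
    rw [hbe_apply t₀, ← hc, hψc, hat₀]
    push_cast
    field_simp
  -- pointwise norm bound
  have key : ∀ (t : X) (r : ℝ), 0 ≤ r → r ≤ 1 →
      ‖(r:ℂ) * a t + (((1 - r*c : ℝ)):ℂ) * lam * be t‖ ≤ 1 := by
    intro t r hr0 hr1
    have h1 : (r:ℂ) * a t + (((1 - r*c : ℝ)):ℂ) * lam * be t
        = a t * (((r + (1 - r*c) * ψ ‖a t‖ : ℝ)):ℂ) := by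
      rw [hbe_apply t,
        show (((1 - r*c : ℝ)):ℂ) * lam * (lam⁻¹ * (a t * ((ψ ‖a t‖ : ℝ) : ℂ)))
          = (lam * lam⁻¹) * ((((1 - r*c : ℝ)):ℂ) * (a t * ((ψ ‖a t‖ : ℝ) : ℂ))) from by ring,
        hll, one_mul]
      push_cast
      ring
    have heq : |r * ‖a t‖ + (1 - r*c) * (‖a t‖ * ψ ‖a t‖)|
        = ‖a t‖ * |r + (1 - r*c) * ψ ‖a t‖| := by
      rw [show r * ‖a t‖ + (1 - r*c) * (‖a t‖ * ψ ‖a t‖)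
            = ‖a t‖ * (r + (1 - r*c) * ψ ‖a t‖) from by ring,
        abs_mul, abs_of_nonneg (norm_nonneg _)]
    rw [h1, norm_mul, Complex.norm_real, Real.norm_eq_abs, ← heq]
    exact hψkey ‖a t‖ r (norm_nonneg _) (hs1 t) hr0 hr1
  -- pointwise norm of be
  have hbept : ∀ t, ‖be t‖ ≤ 1 := by
    intro t
    have h := key t 0 le_rfl zero_le_one
    have e : ((0:ℝ):ℂ) * a t + ((1 - 0*c : ℝ):ℂ) * lam * be t = lam * be t := by
      push_cast; ring
    rw [e, norm_mul, hlamnorm, one_mul] at h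
    exact h
  have hbele : ‖be‖ ≤ 1 := by
    rw [← norm_toBCF_eq_norm]
    exact (norm_le zero_le_one).2 hbept
  have hbenorm : ‖be‖ = 1 := by
    refine le_antisymm hbele ?_
    by_contra hb
    push_neg at hb
    obtain ⟨δ, hδ⟩ : ∃ δ : ℝ, δ = 1 - ‖be‖ := ⟨_, rfl⟩
    have hδ0 : 0 < δ := by rw [hδ]; linarith
    have hδ1 : δ ≤ 1 := by have := norm_nonneg be; rw [hδ]; linarith
    obtain ⟨m, hm⟩ : ∃ m : ℝ, m = 1 - (1-c)*δ/2 := ⟨_, rfl⟩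
    have hmc : c < m := by rw [hm]; nlinarith
    have hm1 : m < 1 := by rw [hm]; nlinarith
    have hex : ∃ t, m < ‖a t‖ := by
      by_contra hno
      push_neg at hno
      have hle : ‖a‖ ≤ m := by
        rw [← norm_toBCF_eq_norm]
        exact (norm_le (le_trans h0.le hmc.le)).2 hno
      rw [ha1] at hle; linarith
    obtain ⟨t, ht⟩ := hex
    have hsc : c ≤ ‖a t‖ := (hmc.trans ht).le
    have hs0' : 0 < ‖a t‖ := lt_of_lt_of_le h0 hsc
    have hval : ‖a t‖ * ψ ‖a t‖ = (1+c-2*‖a t‖)/(1-c) := by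
      rw [hψhigh _ hsc, div_mul_eq_div_div_swap, ← mul_div_assoc, ← mul_div_assoc,
        mul_div_cancel_left₀ _ (ne_of_gt hs0')]
    have hneg : 1 + c - 2*‖a t‖ ≤ 0 := by
      have : (1+c)/2 ≤ m := by rw [hm]; nlinarith
      linarith [this.trans_lt ht]
    have hbig : 1 - δ < ‖be t‖ := by
      have h2 : ‖be t‖ = |‖a t‖ * ψ ‖a t‖| := by
        rw [hbe_apply t, norm_mul, norm_mul, norm_inv, hlamnorm, Complex.norm_real,
          Real.norm_eq_abs, inv_one, one_mul, abs_mul, abs_of_nonneg (norm_nonneg (a t))]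
      rw [h2, hval, abs_div, abs_of_pos h1c, abs_of_nonpos hneg, lt_div_iff₀ h1c]
      rw [hm] at ht
      nlinarith
    have h3 : ‖be t‖ ≤ ‖be‖ := by
      have h := be.toBCF.norm_coe_le_norm t
      rwa [norm_toBCF_eq_norm] at h
    rw [hδ] at hbig
    linarith
  -- equivariance of be
  have hbeeq : ∀ (l : Circle) (t : X), be (l • t) = (l : ℂ) * be t := by
    intro l t
    have hln : ‖(l : ℂ)‖ = 1 := by
      exact Circle.norm_coe l
    rw [hbe_apply, hbe_apply, haeq, norm_mul, hln, one_mul]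
    ring
  refine ⟨a, be, haeq, hbeeq, ha1, hbenorm, hbet₀, rfl, by simp [hε.le], ?_⟩
  intro r hr0 hr1
  have hval₀ : ((r : ℂ) • a + (((1 - r * c : ℝ) : ℂ) * lam) • be) t₀ = lam := by
    rw [ZeroAtInftyContinuousMap.add_apply, ZeroAtInftyContinuousMap.smul_apply, ZeroAtInftyContinuousMap.smul_apply, hbet₀, hat₀, smul_eq_mul, smul_eq_mul]
    push_cast
    ring
  constructor
  · refine le_antisymm ?_ ?_
    · rw [← norm_toBCF_eq_norm]
      refine (norm_le zero_le_one).2 fun t => ?_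
      have h := key t r hr0.le hr1.le
      calc ‖((r : ℂ) • a + (((1 - r * c : ℝ) : ℂ) * lam) • be) t‖
          = ‖(r:ℂ) * a t + (((1 - r*c : ℝ)):ℂ) * lam * be t‖ := by
            rw [ZeroAtInftyContinuousMap.add_apply, ZeroAtInftyContinuousMap.smul_apply, ZeroAtInftyContinuousMap.smul_apply, smul_eq_mul, smul_eq_mul]
        _ ≤ 1 := h
    · calc (1:ℝ) = ‖lam‖ := hlamnorm.symm
        _ = ‖((r : ℂ) • a + (((1 - r * c : ℝ) : ℂ) * lam) • be) t₀‖ := by rw [hval₀]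
        _ ≤ ‖(r : ℂ) • a + (((1 - r * c : ℝ) : ℂ) * lam) • be‖ := by
            have h := ((r : ℂ) • a + (((1 - r * c : ℝ) : ℂ) * lam) • be).toBCF.norm_coe_le_norm t₀
            rwa [norm_toBCF_eq_norm] at h
  · exact hval₀
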